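/- arXiv:2002.12670 — 3 statements merged into one kernel-verified Lean document; each statement's English description precedes it below -/
import Mathlib

section
/- Let H₁ and H be real Hilbert spaces and M : H₁ → H a bounded linear operator for which there exists θ > 0 with ‖Mx‖ ≥ θ‖x‖ for all x ∈ H₁. If (u^k) is a sequence in H₁ such that (Mu^k) converges weakly to some z ∈ H, then z lies in the range of M and the sequence (u^k) converges weakly to the unique u* ∈ H₁ with Mu* = z. -/
open Filter Topology Pointwise
open scoped RealInnerProductSpace

noncomputable section

/-- `f` is proper, convex and lower semicontinuous (extended-real-valued). -/
def ProperConvexLSC {H : Type*} [NormedAddCommGroup H] [InnerProductSpace ℝ H]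
    (f : H → EReal) : Prop :=
  (∀ x, f x ≠ ⊥) ∧ (∃ x, f x ≠ ⊤) ∧
    (∀ x y : H, ∀ a b : ℝ, 0 ≤ a → 0 ≤ b → a + b = 1 →
      f (a • x + b • y) ≤ (a : EReal) * f x + (b : EReal) * f y) ∧
    LowerSemicontinuous f

/-- The convex subdifferential `∂f(x)`. -/
def subdiff {H : Type*} [NormedAddCommGroup H] [InnerProductSpace ℝ H]
    (f : H → EReal) (x : H) : Set H :=
  {w | ∀ z, f x + ((⟪w, z - x⟫ : ℝ) : EReal) ≤ f z}

/-- Weak convergence of a sequence in a Hilbert space. -/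
def WeakTendsto {H : Type*} [NormedAddCommGroup H] [InnerProductSpace ℝ H]
    (x : ℕ → H) (l : H) : Prop :=
  ∀ z : H, Tendsto (fun k => ⟪x k, z⟫) atTop (𝓝 (⟪l, z⟫ : ℝ))

/-- The Fenchel conjugate `f*(w) = sup_x (⟪x, w⟫ - f x)`. -/
def fconj {H : Type*} [NormedAddCommGroup H] [InnerProductSpace ℝ H]
    (f : H → EReal) (w : H) : EReal :=
  ⨆ x, (((⟪x, w⟫ : ℝ) : EReal) - f x)

theorem weak_convergence_transfer_of_bounded_below
    {H₁ H : Type*} [NormedAddCommGroup H₁] [InnerProductSpace ℝ H₁] [CompleteSpace H₁]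
    [NormedAddCommGroup H] [InnerProductSpace ℝ H] [CompleteSpace H]
    (M : H₁ →L[ℝ] H) (θ : ℝ) (hθ : 0 < θ) (hM : ∀ x, θ * ‖x‖ ≤ ‖M x‖)
    (u : ℕ → H₁) (z : H) (hconv : WeakTendsto (fun k => M (u k)) z) :
    z ∈ Set.range M ∧
      ∃ us : H₁, M us = z ∧ WeakTendsto u us ∧ ∀ u' : H₁, M u' = z → u' = us := by
  -- M is bounded below, hence antilipschitz, injective, with closed range
  have hanti : AntilipschitzWith θ⁻¹.toNNReal M := by
    apply ContinuousLinearMap.antilipschitz_of_bound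
    intro x
    rw [Real.coe_toNNReal _ (le_of_lt (inv_pos.mpr hθ)), inv_mul_eq_div, le_div_iff₀ hθ]
    linarith [hM x]
  have hinj : Function.Injective M := hanti.injective
  have hclosed : IsClosed (LinearMap.range (M : H₁ →ₗ[ℝ] H) : Set H) := by
    have h1 : (LinearMap.range (M : H₁ →ₗ[ℝ] H) : Set H) = Set.range M := LinearMap.coe_range _
    rw [h1]
    exact hanti.isClosed_range M.uniformContinuous
  have hcs : CompleteSpace (LinearMap.range (M : H₁ →ₗ[ℝ] H)) := hclosed.completeSpace_coe
  -- z lies in the (closed, hence weakly closed) range of M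
  set K : Submodule ℝ H := LinearMap.range (M : H₁ →ₗ[ℝ] H) with hK
  have hzmem : z ∈ K := by
    set w : H := z - (K.orthogonalProjectionOnto z : H) with hw
    have hwmem : w ∈ Kᗮ := K.sub_starProjection_mem_orthogonal z
    have hzero : ∀ k : ℕ, ⟪M (u k), w⟫ = (0 : ℝ) := fun k =>
      hwmem (M (u k)) (LinearMap.mem_range.mpr ⟨u k, rfl⟩)
    have hzw : ⟪z, w⟫ = (0 : ℝ) := by
      have h1 := hconv w
      simp only [hzero] at h1
      exact (tendsto_nhds_unique tendsto_const_nhds h1).symm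
    have hpw : ⟪(K.orthogonalProjectionOnto z : H), w⟫ = (0 : ℝ) :=
      hwmem _ (K.orthogonalProjectionOnto z).2
    have hww : ⟪w, w⟫ = (0 : ℝ) := by
      rw [hw, inner_sub_left, hzw, hpw, sub_zero]
    have hwz : w = 0 := inner_self_eq_zero.mp hww
    have hz : z = (K.orthogonalProjectionOnto z : H) := sub_eq_zero.mp hwz
    rw [hz]
    exact (K.orthogonalProjectionOnto z).2
  obtain ⟨us, (hus : M us = z)⟩ := LinearMap.mem_range.mp hzmem
  -- the coercive bilinear form B x y = ⟪M x, M y⟫ and Lax-Milgram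
  set B : H₁ →L[ℝ] H₁ →L[ℝ] ℝ := ((innerSL ℝ).comp M).flip.comp M with hB
  have hBapp : ∀ x y, B x y = ⟪M x, M y⟫ := by
    intro x y
    rw [real_inner_comm]; rfl
  have hcoer : IsCoercive B := by
    refine ⟨θ^2, by positivity, fun x => ?_⟩
    rw [hBapp, real_inner_self_eq_norm_mul_norm]
    calc θ^2 * ‖x‖ * ‖x‖ = (θ * ‖x‖) * (θ * ‖x‖) := by ring
    _ ≤ ‖M x‖ * ‖M x‖ :=
        mul_le_mul (hM x) (hM x) (by positivity) (norm_nonneg _)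
  refine ⟨⟨us, hus⟩, us, hus, ?_, fun u' hu' => hinj (by rw [hu', hus])⟩
  -- weak convergence of u to us
  intro w
  set x : H₁ := hcoer.continuousLinearEquivOfBilin.symm w with hx
  have hxw : ∀ y : H₁, ⟪w, y⟫ = ⟪M x, M y⟫ := by
    intro y
    have h1 := hcoer.continuousLinearEquivOfBilin_apply x y
    rw [hBapp] at h1
    rw [← h1, hx, ContinuousLinearEquiv.apply_symm_apply]
  have h2 : ∀ k, ⟪u k, w⟫ = ⟪M (u k), M x⟫ := fun k => by
    rw [real_inner_comm, hxw, real_inner_comm]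
  have h3 : ⟪us, w⟫ = ⟪z, M x⟫ := by
    rw [real_inner_comm, hxw, real_inner_comm, hus]
  simp only [h2, h3]
  exact hconv (M x)
end
end

section
/- Let H, H₁, H₂ be real Hilbert spaces, F : H₁ → (−∞,+∞] and G : H₂ → (−∞,+∞] proper, convex, lower semicontinuous, M : H₁ → H and N : H₂ → H bounded linear operators with adjoints M* and N*, and b ∈ H. Let (u*, v*) satisfy Mu* + Nv* = b with F(u*) and G(v*) finite, and let sequences (u^{k+1}) in H₁, (v^k) in H₂, (y^k) and (x^k) in H satisfy −N*y^k ∈ ∂G(v^k) and −M*x^k ∈ ∂F(u^{k+1}) for all k, ‖y^k − x^k‖ → 0, ‖Mu^{k+1} + Nv^k − b‖ → 0, (Mu^{k+1}) converges weakly to Mu*, and (y^k) is bounded. Then limsup_{k→+∞} (F(u^{k+1}) + G(v^k)) ≤ F(u*) + G(v*). -/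
open Filter Topology Pointwise
open scoped RealInnerProductSpace

noncomputable section

lemma bdd_of_tendsto' {f : ℕ → ℝ} {L : ℝ} (h : Tendsto f atTop (𝓝 L)) :
    ∃ C, ∀ n, |f n| ≤ C := by
  obtain ⟨C, hC⟩ := h.abs.bddAbove_range
  exact ⟨C, fun n => hC ⟨n, rfl⟩⟩

lemma ereal_sub_of_add_le {A : EReal} {c a : ℝ} (h : A + (c : EReal) ≤ (a : EReal)) :
    A ≤ ((a - c : ℝ) : EReal) := by
  have := add_le_add h (le_refl ((-c : ℝ) : EReal))
  rwa [add_assoc, ← EReal.coe_add, add_neg_cancel, EReal.coe_zero, add_zero,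
    ← EReal.coe_add, show a + -c = a - c by ring] at this

theorem primal_values_limsup_le
    {H H₁ H₂ : Type*}
    [NormedAddCommGroup H] [InnerProductSpace ℝ H] [CompleteSpace H]
    [NormedAddCommGroup H₁] [InnerProductSpace ℝ H₁] [CompleteSpace H₁]
    [NormedAddCommGroup H₂] [InnerProductSpace ℝ H₂] [CompleteSpace H₂]
    (F : H₁ → EReal) (G : H₂ → EReal)
    (hF : ProperConvexLSC F) (hG : ProperConvexLSC G)
    (M : H₁ →L[ℝ] H) (N : H₂ →L[ℝ] H) (b : H)
    (us : H₁) (vs : H₂) (hfeas : M us + N vs = b)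
    (hFfin : F us ≠ ⊤ ∧ F us ≠ ⊥) (hGfin : G vs ≠ ⊤ ∧ G vs ≠ ⊥)
    (u : ℕ → H₁) (v : ℕ → H₂) (y x : ℕ → H)
    (hG' : ∀ k, -(ContinuousLinearMap.adjoint N (y k)) ∈ subdiff G (v k))
    (hF' : ∀ k, -(ContinuousLinearMap.adjoint M (x k)) ∈ subdiff F (u (k + 1)))
    (hyx : Tendsto (fun k => ‖y k - x k‖) atTop (𝓝 0))
    (hres : Tendsto (fun k => ‖M (u (k + 1)) + N (v k) - b‖) atTop (𝓝 0))
    (hMu : WeakTendsto (fun k => M (u (k + 1))) (M us))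
    (hybdd : ∃ C : ℝ, ∀ k, ‖y k‖ ≤ C) :
    Filter.limsup (fun k => F (u (k + 1)) + G (v k)) atTop ≤ F us + G vs := by
  obtain ⟨C, hC⟩ := hybdd
  set a := (F us).toReal with ha
  set g := (G vs).toReal with hg
  have hFa : F us = (a : EReal) := (EReal.coe_toReal hFfin.1 hFfin.2).symm
  have hGg : G vs = (g : EReal) := (EReal.coe_toReal hGfin.1 hGfin.2).symm
  set c : ℕ → ℝ := fun k => ⟪x k, M (u (k + 1)) - M us⟫ with hc
  set d : ℕ → ℝ := fun k => ⟪y k, N (v k) - N vs⟫ with hd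
  -- per-k inequality
  have key : ∀ k, F (u (k + 1)) + G (v k) ≤ (((a - c k) + (g - d k) : ℝ) : EReal) := by
    intro k
    have h1 : F (u (k + 1)) ≤ ((a - c k : ℝ) : EReal) := by
      have := hF' k us
      have hip : (⟪-(ContinuousLinearMap.adjoint M (x k)), us - u (k + 1)⟫ : ℝ) = c k := by
        simp only [inner_neg_left, ContinuousLinearMap.adjoint_inner_left, hc, map_sub,
          inner_sub_right]
        ring
      rw [hip, hFa] at this
      exact ereal_sub_of_add_le this
    have h2 : G (v k) ≤ ((g - d k : ℝ) : EReal) := by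
      have := hG' k vs
      have hip : (⟪-(ContinuousLinearMap.adjoint N (y k)), vs - v k⟫ : ℝ) = d k := by
        simp only [inner_neg_left, ContinuousLinearMap.adjoint_inner_left, hd, map_sub,
          inner_sub_right]
        ring
      rw [hip, hGg] at this
      exact ereal_sub_of_add_le this
    calc F (u (k + 1)) + G (v k) ≤ ((a - c k : ℝ) : EReal) + ((g - d k : ℝ) : EReal) :=
          add_le_add h1 h2
      _ = (((a - c k) + (g - d k) : ℝ) : EReal) := by rw [← EReal.coe_add]
  -- boundedness of M u (k+1) - M us via Banach–Steinhaus
  obtain ⟨D, hD⟩ : ∃ D, ∀ k, ‖M (u (k + 1)) - M us‖ ≤ D := by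
    set gop : ℕ → H →L[ℝ] ℝ := fun k =>
      (InnerProductSpace.toDual ℝ H (M (u (k + 1)) - M us) : H →L[ℝ] ℝ) with hgop
    have hpt : ∀ z, ∃ Cz, ∀ k, ‖gop k z‖ ≤ Cz := by
      intro z
      have ht : Tendsto (fun k => (⟪M (u (k + 1)) - M us, z⟫ : ℝ)) atTop (𝓝 0) := by
        have h0 : Tendsto (fun k => (⟪M (u (k + 1)), z⟫ - ⟪M us, z⟫ : ℝ)) atTop
            (𝓝 ((⟪M us, z⟫ : ℝ) - ⟪M us, z⟫)) := Tendsto.sub (hMu z) tendsto_const_nhds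
        simp only [sub_self] at h0
        simpa [inner_sub_left] using h0
      obtain ⟨Cz, hCz⟩ := bdd_of_tendsto' ht
      refine ⟨Cz, fun k => ?_⟩
      simpa [hgop, InnerProductSpace.toDual_apply_apply, Real.norm_eq_abs, inner_sub_left] using hCz k
    obtain ⟨D, hD⟩ := banach_steinhaus hpt
    refine ⟨D, fun k => ?_⟩
    have hnm : ‖gop k‖ = ‖M (u (k + 1)) - M us‖ :=
      (InnerProductSpace.toDual ℝ H).norm_map _
    rw [← hnm]; exact hD k
  -- error term tends to zero
  have herr : Tendsto (fun k => c k + d k) atTop (𝓝 0) := by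
    have hrepr : ∀ k, c k + d k =
        ⟪x k - y k, M (u (k + 1)) - M us⟫ + ⟪y k, M (u (k + 1)) + N (v k) - b⟫ := by
      intro k
      simp only [hc, hd, inner_sub_left, inner_sub_right, inner_add_right, ← hfeas]
      ring
    have hbound : ∀ k, |c k + d k| ≤ ‖y k - x k‖ * D + C * ‖M (u (k + 1)) + N (v k) - b‖ := by
      intro k
      rw [hrepr k]
      calc |⟪x k - y k, M (u (k + 1)) - M us⟫ + ⟪y k, M (u (k + 1)) + N (v k) - b⟫|
          ≤ |(⟪x k - y k, M (u (k + 1)) - M us⟫ : ℝ)| + |(⟪y k, M (u (k + 1)) + N (v k) - b⟫ : ℝ)| :=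
            abs_add_le _ _
        _ ≤ ‖x k - y k‖ * ‖M (u (k + 1)) - M us‖ + ‖y k‖ * ‖M (u (k + 1)) + N (v k) - b‖ :=
            add_le_add (abs_real_inner_le_norm _ _) (abs_real_inner_le_norm _ _)
        _ ≤ ‖y k - x k‖ * D + C * ‖M (u (k + 1)) + N (v k) - b‖ := by
            rw [norm_sub_rev (x k)]
            exact add_le_add (mul_le_mul_of_nonneg_left (hD k) (norm_nonneg _))
              (mul_le_mul_of_nonneg_right (hC k) (norm_nonneg _))
    have hzero : Tendsto (fun k => ‖y k - x k‖ * D + C * ‖M (u (k + 1)) + N (v k) - b‖)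
        atTop (𝓝 0) := by
      have h1 := hyx.mul_const D
      have h2 := hres.const_mul C
      simpa using h1.add h2
    exact squeeze_zero_norm (fun k => by simpa [Real.norm_eq_abs] using hbound k) hzero
  -- conclude
  have hs : Tendsto (fun k => ((a - c k) + (g - d k) : ℝ)) atTop (𝓝 (a + g)) := by
    have : Tendsto (fun k => (a + g) - (c k + d k)) atTop (𝓝 ((a + g) - 0)) :=
      tendsto_const_nhds.sub herr
    simp only [sub_zero] at this
    convert this using 2 with k
    ring
  have hsE : Tendsto (fun k => (((a - c k) + (g - d k) : ℝ) : EReal)) atTop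
      (𝓝 ((a + g : ℝ) : EReal)) := (continuous_coe_real_ereal.tendsto _).comp hs
  calc Filter.limsup (fun k => F (u (k + 1)) + G (v k)) atTop
      ≤ Filter.limsup (fun k => (((a - c k) + (g - d k) : ℝ) : EReal)) atTop :=
        Filter.limsup_le_limsup (Filter.Eventually.of_forall key)
    _ = ((a + g : ℝ) : EReal) := hsE.limsup_eq
    _ = F us + G vs := by rw [hFa, hGg, EReal.coe_add]
end
end

section
/- Let H, H₁, H₂ be real Hilbert spaces, F : H₁ → (−∞,+∞] and G : H₂ → (−∞,+∞] proper, convex, lower semicontinuous, M : H₁ → H and N : H₂ → H bounded linear operators with adjoints M* and N*, b ∈ H and γ > 0. Let sequences (u^{k+1}), (v^k), (y^k) satisfy −N*y^k ∈ ∂G(v^k) and −M*x^k ∈ ∂F(u^{k+1}) for all k, where x^k := y^k + γ(Mu^{k+1} + Nv^k − b). If F(u^{k+1}) + G(v^k) converges to a real number V as k → +∞, ‖Mu^{k+1} + Nv^k − b‖ → 0, and the sequences (Mu^{k+1}) and (y^k) are bounded, then −F*(−M*x^k) − G*(−N*y^k) − ⟨y^k, b⟩ → V as k → +∞. -/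
open Filter Topology Pointwise
open scoped RealInnerProductSpace

noncomputable section

/-- Fenchel–Young equality under a subgradient inclusion. -/
lemma fenchel_young {H : Type*} [NormedAddCommGroup H] [InnerProductSpace ℝ H]
    (f : H → EReal) (hbot : ∀ x, f x ≠ ⊥) (htop : ∃ x, f x ≠ ⊤)
    {x w : H} (hw : w ∈ subdiff f x) :
    f x = ((f x).toReal : EReal) ∧
      fconj f w = ((⟪x, w⟫ - (f x).toReal : ℝ) : EReal) := by
  have hxt : f x ≠ ⊤ := by
    intro h
    obtain ⟨z, hz⟩ := htop
    have := hw z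
    rw [h] at this
    simp only [EReal.top_add_coe, top_le_iff] at this
    exact hz this
  have hco : ((f x).toReal : EReal) = f x := EReal.coe_toReal hxt (hbot x)
  refine ⟨hco.symm, le_antisymm ?_ ?_⟩
  · apply iSup_le
    intro z
    have hz := hw z
    rw [← hco] at hz
    rcases eq_or_ne (f z) ⊤ with ht | ht
    · rw [ht]; simp
    · have hzco : ((f z).toReal : EReal) = f z := EReal.coe_toReal ht (hbot z)
      rw [← hzco] at hz ⊢
      rw [← EReal.coe_add] at hz
      have hle : (f x).toReal + ⟪w, z - x⟫ ≤ (f z).toReal := EReal.coe_le_coe_iff.mp hz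
      rw [← EReal.coe_sub, EReal.coe_le_coe_iff]
      have : ⟪w, z - x⟫ = ⟪z, w⟫ - ⟪x, w⟫ := by
        rw [inner_sub_right, real_inner_comm w z, real_inner_comm w x]
      linarith [this ▸ hle]
  · have := le_iSup (fun z => (((⟪z, w⟫ : ℝ) : EReal) - f z)) x
    rw [← hco, ← EReal.coe_sub] at this
    exact this

theorem dual_values_convergence
    {H H₁ H₂ : Type*}
    [NormedAddCommGroup H] [InnerProductSpace ℝ H] [CompleteSpace H]
    [NormedAddCommGroup H₁] [InnerProductSpace ℝ H₁] [CompleteSpace H₁]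
    [NormedAddCommGroup H₂] [InnerProductSpace ℝ H₂] [CompleteSpace H₂]
    (F : H₁ → EReal) (G : H₂ → EReal)
    (hF : ProperConvexLSC F) (hG : ProperConvexLSC G)
    (M : H₁ →L[ℝ] H) (N : H₂ →L[ℝ] H) (b : H) (γ : ℝ) (hγ : 0 < γ)
    (u : ℕ → H₁) (v : ℕ → H₂) (y : ℕ → H)
    (hG' : ∀ k, -(ContinuousLinearMap.adjoint N (y k)) ∈ subdiff G (v k))
    (hF' : ∀ k, -(ContinuousLinearMap.adjoint M
        (y k + γ • (M (u (k + 1)) + N (v k) - b))) ∈ subdiff F (u (k + 1)))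
    (V : ℝ)
    (hV : Tendsto (fun k => F (u (k + 1)) + G (v k)) atTop (𝓝 (V : EReal)))
    (hres : Tendsto (fun k => ‖M (u (k + 1)) + N (v k) - b‖) atTop (𝓝 0))
    (hMubdd : ∃ C : ℝ, ∀ k, ‖M (u (k + 1))‖ ≤ C)
    (hybdd : ∃ C : ℝ, ∀ k, ‖y k‖ ≤ C) :
    Tendsto (fun k =>
        - fconj F (-(ContinuousLinearMap.adjoint M
            (y k + γ • (M (u (k + 1)) + N (v k) - b))))
        - fconj G (-(ContinuousLinearMap.adjoint N (y k)))
        - ((⟪y k, b⟫ : ℝ) : EReal))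
      atTop (𝓝 (V : EReal)) := by
  obtain ⟨hFbot, hFtop, -, -⟩ := hF
  obtain ⟨hGbot, hGtop, -, -⟩ := hG
  obtain ⟨CM, hCM⟩ := hMubdd
  obtain ⟨Cy, hCy⟩ := hybdd
  set r : ℕ → H := fun k => M (u (k + 1)) + N (v k) - b with hr
  set a : ℕ → ℝ := fun k => (F (u (k + 1))).toReal with ha
  set c : ℕ → ℝ := fun k => (G (v k)).toReal with hc
  have hFY := fun k => fenchel_young F hFbot hFtop (hF' k)
  have hGY := fun k => fenchel_young G hGbot hGtop (hG' k)
  -- the real value of the dual objective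
  set s : ℕ → ℝ := fun k => a k + c k + (⟪r k, y k⟫ + γ * ⟪M (u (k + 1)), r k⟫) with hs
  have key : ∀ k,
      - fconj F (-(ContinuousLinearMap.adjoint M
            (y k + γ • (M (u (k + 1)) + N (v k) - b))))
        - fconj G (-(ContinuousLinearMap.adjoint N (y k)))
        - ((⟪y k, b⟫ : ℝ) : EReal) = ((s k : ℝ) : EReal) := by
    intro k
    rw [(hFY k).2, (hGY k).2]
    have h1 : ⟪u (k + 1), -(ContinuousLinearMap.adjoint M
        (y k + γ • (M (u (k + 1)) + N (v k) - b)))⟫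
        = -⟪M (u (k + 1)), y k + γ • r k⟫ := by
      rw [inner_neg_right, ContinuousLinearMap.adjoint_inner_right]
    have h2 : ⟪v k, -(ContinuousLinearMap.adjoint N (y k))⟫ = -⟪N (v k), y k⟫ := by
      rw [inner_neg_right, ContinuousLinearMap.adjoint_inner_right]
    rw [h1, h2]
    rw [show (-((-⟪M (u (k + 1)), y k + γ • r k⟫ - a k : ℝ) : EReal)
        - ((-⟪N (v k), y k⟫ - c k : ℝ) : EReal) - ((⟪y k, b⟫ : ℝ) : EReal))
        = ((-( -⟪M (u (k + 1)), y k + γ • r k⟫ - a k) - (-⟪N (v k), y k⟫ - c k)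
            - ⟪y k, b⟫ : ℝ) : EReal) by norm_cast]
    congr 1
    have hinner : ⟪M (u (k + 1)), y k + γ • r k⟫
        = ⟪M (u (k + 1)), y k⟫ + γ * ⟪M (u (k + 1)), r k⟫ := by
      rw [inner_add_right, real_inner_smul_right]
    have hsplit : ⟪r k, y k⟫ = ⟪M (u (k + 1)), y k⟫ + ⟪N (v k), y k⟫ - ⟪y k, b⟫ := by
      rw [hr]
      simp only [inner_sub_left, inner_add_left]
      rw [real_inner_comm b (y k)]
    rw [hs]
    simp only []
    rw [hinner, hsplit]
    ring
  have hac : Tendsto (fun k => a k + c k) atTop (𝓝 V) := by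
    rw [← EReal.tendsto_coe]
    have : (fun k => ((a k + c k : ℝ) : EReal)) = fun k => F (u (k + 1)) + G (v k) := by
      funext k
      rw [EReal.coe_add, ← (hFY k).1, ← (hGY k).1]
    rw [this]
    exact hV
  have he : Tendsto (fun k => ⟪r k, y k⟫ + γ * ⟪M (u (k + 1)), r k⟫) atTop (𝓝 0) := by
    apply squeeze_zero_norm (a := fun k => ‖r k‖ * (Cy + γ * CM))
    · intro k
      have h0M : (0:ℝ) ≤ CM := le_trans (norm_nonneg _) (hCM 0)
      have h0y : (0:ℝ) ≤ Cy := le_trans (norm_nonneg _) (hCy 0)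
      calc ‖⟪r k, y k⟫ + γ * ⟪M (u (k + 1)), r k⟫‖
          ≤ ‖⟪r k, y k⟫‖ + ‖γ * ⟪M (u (k + 1)), r k⟫‖ := norm_add_le _ _
        _ ≤ ‖r k‖ * ‖y k‖ + γ * (‖M (u (k + 1))‖ * ‖r k‖) := by
            rw [norm_mul, Real.norm_eq_abs γ, abs_of_pos hγ]
            gcongr
            · exact norm_inner_le_norm _ _
            · exact norm_inner_le_norm _ _
        _ ≤ ‖r k‖ * Cy + γ * (CM * ‖r k‖) := by
            gcongr
            · exact hCy k
            · exact hCM k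
        _ = ‖r k‖ * (Cy + γ * CM) := by ring
    · have := hres.mul_const (Cy + γ * CM)
      rwa [zero_mul] at this
  have hstend : Tendsto s atTop (𝓝 V) := by
    have := hac.add he
    rwa [add_zero] at this
  have : Tendsto (fun k => ((s k : ℝ) : EReal)) atTop (𝓝 (V : EReal)) :=
    EReal.tendsto_coe.mpr hstend
  exact this.congr fun k => (key k).symm
end
end
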